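/- arXiv:2004.10000 — 3 statements merged into one kernel-verified Lean document; each statement's English description precedes it below -/
import Mathlib

section
/- Given a compact metric space (X, d), a finitely generated group Γ with word norm ‖·‖ acting on X by homeomorphisms, and t ≥ 1, there exists a largest metric ρ on X satisfying (1) ρ(x,y) ≤ t·d(x,y) for all x,y ∈ X, and (2) ρ(x, γ·x) ≤ ‖γ‖ for all x ∈ X and γ ∈ Γ. -/
/-- The word length of a group element with respect to a generating set `S`. -/
noncomputable def wordLen {G : Type*} [Group G] (S : Finset G) (g : G) : ℕ :=
  sInf {n : ℕ | ∃ l : List G, l.length = n ∧ (∀ s ∈ l, s ∈ S) ∧ l.prod = g}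

/-- `ρ` is a metric (as a real-valued distance function). -/
def IsMetricFun {X : Type*} (ρ : X → X → ℝ) : Prop :=
  (∀ x y, ρ x y = 0 ↔ x = y) ∧ (∀ x y, ρ x y = ρ y x) ∧
    (∀ x y z, ρ x z ≤ ρ x y + ρ y z)

lemma wordLen_pos {G : Type*} [Group G] (S : Finset G)
    (hgen : Subgroup.closure (S : Set G) = ⊤) (hsym : ∀ s ∈ S, s⁻¹ ∈ S)
    {g : G} (hg : g ≠ 1) : 1 ≤ wordLen S g := by
  have hmem : g ∈ (Subgroup.closure (S : Set G)).toSubmonoid := by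
    rw [hgen]; trivial
  rw [Subgroup.closure_toSubmonoid] at hmem
  obtain ⟨l, hl, hprod⟩ := Submonoid.exists_list_of_mem_closure hmem
  have hne : {n : ℕ | ∃ l : List G, l.length = n ∧ (∀ s ∈ l, s ∈ S) ∧ l.prod = g}.Nonempty := by
    refine ⟨l.length, l, rfl, ?_, hprod⟩
    intro s hs
    rcases hl s hs with h | h
    · exact h
    · have : s⁻¹ ∈ S := by simpa using h
      simpa using hsym _ this
  have h0 : 0 ∉ {n : ℕ | ∃ l : List G, l.length = n ∧ (∀ s ∈ l, s ∈ S) ∧ l.prod = g} := by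
    rintro ⟨l', hlen, -, hprod'⟩
    rw [List.length_eq_zero_iff.mp hlen] at hprod'
    exact hg (by simpa using hprod'.symm)
  have : sInf {n : ℕ | ∃ l : List G, l.length = n ∧ (∀ s ∈ l, s ∈ S) ∧ l.prod = g} ≠ 0 := by
    intro h
    rcases (Nat.sInf_eq_zero.mp h) with h | h
    · exact h0 h
    · exact hne.ne_empty h
  exact Nat.one_le_iff_ne_zero.mpr this

lemma min_add_one {a b : ℝ} (ha : 0 ≤ a) (hb : 0 ≤ b) :
    min (a + b) 1 ≤ min a 1 + min b 1 := by
  rcases le_total a 1 with h1 | h1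
  · rcases le_total b 1 with h2 | h2
    · rw [min_eq_left h1, min_eq_left h2]; exact min_le_left _ _
    · have : min (a + b) 1 ≤ 1 := min_le_right _ _
      have h3 : (0:ℝ) ≤ min a 1 := le_min ha zero_le_one
      rw [min_eq_right h2]; linarith
  · have : min (a + b) 1 ≤ 1 := min_le_right _ _
    have h3 : (0:ℝ) ≤ min b 1 := le_min hb zero_le_one
    rw [min_eq_right h1]; linarith

/-- Existence of the warped metric at level `t`: the largest metric `ρ` with
`ρ ≤ t·d` and `ρ(x, γ·x) ≤ ‖γ‖`. -/
theorem warped_metric_exists {X Γ : Type*} [MetricSpace X] [CompactSpace X]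
    [Group Γ] [MulAction Γ X]
    (hcont : ∀ γ : Γ, Continuous fun x : X => γ • x)
    (S : Finset Γ) (hgen : Subgroup.closure (S : Set Γ) = ⊤)
    (hsym : ∀ s ∈ S, s⁻¹ ∈ S)
    (t : ℝ) (ht : 1 ≤ t) :
    ∃ ρ : X → X → ℝ, IsMetricFun ρ ∧
      (∀ x y : X, ρ x y ≤ t * dist x y) ∧
      (∀ (x : X) (γ : Γ), ρ x (γ • x) ≤ (wordLen S γ : ℝ)) ∧
      (∀ ρ' : X → X → ℝ, IsMetricFun ρ' →
        (∀ x y : X, ρ' x y ≤ t * dist x y) →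
        (∀ (x : X) (γ : Γ), ρ' x (γ • x) ≤ (wordLen S γ : ℝ)) →
        ∀ x y : X, ρ' x y ≤ ρ x y) := by
  classical
  set F : Set (X → X → ℝ) := {f | IsMetricFun f ∧ (∀ x y : X, f x y ≤ t * dist x y) ∧
      ∀ (x : X) (γ : Γ), f x (γ • x) ≤ (wordLen S γ : ℝ)} with hF
  -- the truncated metric belongs to F
  set ρ₀ : X → X → ℝ := fun x y => min (dist x y) 1 with hρ₀def
  have hρ₀ : ρ₀ ∈ F := by
    refine ⟨⟨?_, ?_, ?_⟩, ?_, ?_⟩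
    · intro x y
      constructor
      · intro h
        by_contra hxy
        have hd : 0 < dist x y := dist_pos.mpr hxy
        have : 0 < min (dist x y) 1 := lt_min hd zero_lt_one
        simp only [hρ₀def] at h
        linarith
      · intro h; subst h; simp [hρ₀def]
    · intro x y; simp [hρ₀def, dist_comm]
    · intro x y z
      calc min (dist x z) 1 ≤ min (dist x y + dist y z) 1 :=
            min_le_min (dist_triangle x y z) le_rfl
        _ ≤ min (dist x y) 1 + min (dist y z) 1 := min_add_one dist_nonneg dist_nonneg
    · intro x y
      calc min (dist x y) 1 ≤ dist x y := min_le_left _ _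
        _ = 1 * dist x y := (one_mul _).symm
        _ ≤ t * dist x y := mul_le_mul_of_nonneg_right ht dist_nonneg
    · intro x γ
      by_cases hγ : γ = 1
      · subst hγ; simp [hρ₀def]
      · calc min (dist x (γ • x)) 1 ≤ 1 := min_le_right _ _
          _ ≤ (wordLen S γ : ℝ) := by exact_mod_cast wordLen_pos S hgen hsym hγ
  have hρ₀nn : ∀ x y : X, 0 ≤ ρ₀ x y := fun x y => le_min dist_nonneg zero_le_one
  set ρ : X → X → ℝ := fun x y => sSup ((fun f => f x y) '' F) with hρdef
  have hne : ∀ x y : X, ((fun f => f x y) '' F).Nonempty := fun x y => ⟨ρ₀ x y, ρ₀, hρ₀, rfl⟩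
  have hbdd : ∀ x y : X, BddAbove ((fun f => f x y) '' F) := by
    intro x y
    refine ⟨t * dist x y, ?_⟩
    rintro r ⟨f, hf, rfl⟩
    exact hf.2.1 x y
  have hmax : ∀ f ∈ F, ∀ x y : X, f x y ≤ ρ x y := fun f hf x y =>
    le_csSup (hbdd x y) ⟨f, hf, rfl⟩
  have hle : ∀ x y : X, ρ x y ≤ t * dist x y := by
    intro x y
    exact csSup_le (hne x y) (by rintro r ⟨f, hf, rfl⟩; exact hf.2.1 x y)
  refine ⟨ρ, ⟨?_, ?_, ?_⟩, hle, ?_, ?_⟩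
  · intro x y
    constructor
    · intro h
      have h1 : ρ₀ x y ≤ ρ x y := hmax ρ₀ hρ₀ x y
      have h2 : ρ₀ x y = 0 := le_antisymm (h ▸ h1) (hρ₀nn x y)
      exact (hρ₀.1.1 x y).mp h2
    · intro h; subst h
      refine le_antisymm ?_ ?_
      · exact csSup_le (hne x x) (by rintro r ⟨f, hf, rfl⟩; exact le_of_eq ((hf.1.1 x x).mpr rfl))
      · have := hmax ρ₀ hρ₀ x x
        rwa [(hρ₀.1.1 x x).mpr rfl] at this
  · intro x y
    have key : ∀ a b : X, ρ a b ≤ ρ b a := by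
      intro a b
      refine csSup_le (hne a b) ?_
      rintro r ⟨f, hf, rfl⟩
      show f a b ≤ ρ b a
      rw [hf.1.2.1 a b]
      exact hmax f hf b a
    exact le_antisymm (key x y) (key y x)
  · intro x y z
    refine csSup_le (hne x z) ?_
    rintro r ⟨f, hf, rfl⟩
    calc f x z ≤ f x y + f y z := hf.1.2.2 x y z
      _ ≤ ρ x y + ρ y z := add_le_add (hmax f hf x y) (hmax f hf y z)
  · intro x γ
    exact csSup_le (hne x (γ • x)) (by rintro r ⟨f, hf, rfl⟩; exact hf.2.2 x γ)
  · intro ρ' h1 h2 h3 x y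
    exact hmax ρ' ⟨h1, h2, h3⟩ x y
end

section
/- Let {X_n} be a sequence of compact metric spaces such that: (a) there is a constant D with diam(X_n) ≤ D for all n, and (b) for all ε > 0 there exists N(ε) such that every X_n contains an ε-net of at most N(ε) points. Then some subsequence of {X_n} converges in the Gromov–Hausdorff metric to a compact metric space. -/
open Filter

open GromovHausdorff Metric Set in
/-- If the Gromov–Hausdorff distance between `A` and `B` is less than `r`, then there
is a map `A → B` of distortion at most `2r` whose range is `2r`-dense. -/
lemma exists_approx_map_of_ghDist_lt (A B : Type) [MetricSpace A] [CompactSpace A]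
    [Nonempty A] [MetricSpace B] [CompactSpace B] [Nonempty B] {r : ℝ}
    (hr : ghDist A B < r) :
    ∃ f : A → B, (∀ p q : A, |dist (f p) (f q) - dist p q| ≤ 2 * r) ∧
      ∀ b : B, ∃ a : A, dist b (f a) ≤ 2 * r := by
  set Φ := optimalGHInjl A B
  set Ψ := optimalGHInjr A B
  have hΦ : Isometry Φ := isometry_optimalGHInjl A B
  have hΨ : Isometry Ψ := isometry_optimalGHInjr A B
  have hH : hausdorffDist (range Φ) (range Ψ) < r := by
    rw [hausdorffDist_optimal]; exact hr
  have hfin : EMetric.hausdorffEdist (range Φ) (range Ψ) ≠ ⊤ :=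
    hausdorffEdist_ne_top_of_nonempty_of_bounded (range_nonempty _) (range_nonempty _)
      (isCompact_range hΦ.continuous).isBounded
      (isCompact_range hΨ.continuous).isBounded
  have hsel : ∀ a : A, ∃ b : B, dist (Φ a) (Ψ b) < r := by
    intro a
    obtain ⟨y, ⟨b, rfl⟩, hy⟩ := exists_dist_lt_of_hausdorffDist_lt (mem_range_self a) hH hfin
    exact ⟨b, hy⟩
  choose f hf using hsel
  refine ⟨f, ?_, ?_⟩
  · intro p q
    have h1 : dist (dist (Ψ (f p)) (Ψ (f q))) (dist (Φ p) (Φ q))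
        ≤ dist (Ψ (f p)) (Φ p) + dist (Ψ (f q)) (Φ q) := dist_dist_dist_le _ _ _ _
    rw [hΨ.dist_eq, hΦ.dist_eq, Real.dist_eq] at h1
    have h2 : dist (Ψ (f p)) (Φ p) ≤ r := by rw [dist_comm]; exact (hf p).le
    have h3 : dist (Ψ (f q)) (Φ q) ≤ r := by rw [dist_comm]; exact (hf q).le
    linarith
  · intro b
    obtain ⟨x, ⟨a, rfl⟩, hx⟩ := exists_dist_lt_of_hausdorffDist_lt' (mem_range_self b) hH hfin
    refine ⟨a, ?_⟩
    have : dist (Ψ b) (Ψ (f a)) ≤ dist (Ψ b) (Φ a) + dist (Φ a) (Ψ (f a)) :=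
      dist_triangle _ _ _
    rw [hΨ.dist_eq] at this
    rw [dist_comm] at hx
    have := (hf a).le
    linarith [hx.le, (hf a).le, ‹dist b (f a) ≤ dist (Ψ b) (Φ a) + dist (Φ a) (Ψ (f a))›]

/-- Gromov's compactness criterion: a uniformly totally bounded sequence of
compact metric spaces has a subsequence converging in the Gromov–Hausdorff
sense (witnessed by `ε_k`-isometries with `ε_k → 0`) to a compact metric space. -/
theorem uniformly_totally_bounded_subseq_GH_converges
    (X : ℕ → Type) [∀ n, MetricSpace (X n)] [∀ n, CompactSpace (X n)]
    [∀ n, Nonempty (X n)]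
    (D : ℝ) (hD : ∀ n, Metric.diam (Set.univ : Set (X n)) ≤ D)
    (N : ℝ → ℕ)
    (hnet : ∀ ε : ℝ, 0 < ε → ∀ n, ∃ s : Finset (X n),
      s.card ≤ N ε ∧ ∀ x : X n, ∃ y ∈ s, dist x y ≤ ε) :
    ∃ (Y : Type) (_ : MetricSpace Y), CompactSpace Y ∧
      ∃ nk : ℕ → ℕ, StrictMono nk ∧
        ∃ (ε : ℕ → ℝ) (f : ∀ k, X (nk k) → Y),
          Tendsto ε atTop (nhds 0) ∧ (∀ k, 0 < ε k) ∧
          ∀ k, (∀ p q : X (nk k), |dist (f k p) (f k q) - dist p q| ≤ ε k) ∧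
            (∀ y : Y, ∃ p : X (nk k), dist y (f k p) ≤ ε k) := by
  classical
  set u : ℕ → GromovHausdorff.GHSpace := fun n => GromovHausdorff.toGHSpace (X n) with hu
  -- For each `n`, the representative of `u n` is isometric to `X n`.
  have hrep : ∀ n, Nonempty (X n ≃ᵢ (u n).Rep) := by
    intro n
    rw [← GromovHausdorff.toGHSpace_eq_toGHSpace_iff_isometryEquiv]
    rw [(u n).toGHSpace_rep]
  -- total boundedness of the range of `u`
  have htb : TotallyBounded (Set.range u) := by
    apply GromovHausdorff.totallyBounded (C := D) (u := fun m => 1 / (m + 1))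
      (K := fun m => N (1 / (2 * (m + 1))))
    · exact tendsto_one_div_add_atTop_nhds_zero_nat
    · rintro p ⟨n, rfl⟩
      obtain ⟨e⟩ := hrep n
      rw [← e.diam_univ]
      exact hD n
    · rintro p ⟨n, rfl⟩ m
      obtain ⟨e⟩ := hrep n
      have hεpos : (0 : ℝ) < 1 / (2 * (m + 1)) := by positivity
      obtain ⟨s, hcard, hs⟩ := hnet (1 / (2 * (m + 1))) hεpos n
      refine ⟨e '' ↑s, ?_, ?_⟩
      · calc Cardinal.mk (e '' ↑s : Set _) ≤ Cardinal.mk (↑s : Set (X n)) :=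
            Cardinal.mk_image_le
          _ = s.card := Cardinal.mk_coe_finset
          _ ≤ _ := by exact_mod_cast hcard
      · intro x _
        obtain ⟨y, hy, hxy⟩ := hs (e.symm x)
        refine Set.mem_iUnion₂.2 ⟨e y, Set.mem_image_of_mem _ hy, ?_⟩
        have hxd : dist x (e y) = dist (e.symm x) y := by
          rw [← e.dist_eq (e.symm x) y, e.apply_symm_apply]
        rw [Metric.mem_ball, hxd]
        calc dist (e.symm x) y ≤ 1 / (2 * (m + 1)) := hxy
          _ < 1 / (m + 1) := by
            apply div_lt_div_of_pos_left one_pos (by positivity)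
            linarith [Nat.cast_nonneg (α := ℝ) m]
  -- extract a convergent subsequence
  have hcomp : IsCompact (closure (Set.range u)) :=
    TotallyBounded.isCompact_of_isClosed htb.closure isClosed_closure
  obtain ⟨p, -, nk, hnk, hconv⟩ := hcomp.tendsto_subseq
    (fun n => subset_closure (Set.mem_range_self n))
  refine ⟨p.Rep, inferInstance, inferInstance, nk, hnk, ?_⟩
  -- distances to the limit
  have hd : ∀ k, GromovHausdorff.ghDist (X (nk k)) p.Rep = dist (u (nk k)) p := by
    intro k
    rw [GromovHausdorff.ghDist, p.toGHSpace_rep]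
  set ε : ℕ → ℝ := fun k => 2 * (dist (u (nk k)) p + 1 / (k + 1)) with hε
  have hεpos : ∀ k, 0 < ε k := by
    intro k
    have : (0 : ℝ) < 1 / ((k : ℝ) + 1) := by positivity
    have := dist_nonneg (x := u (nk k)) (y := p)
    simp only [hε]
    linarith
  have hf : ∀ k, ∃ f : X (nk k) → p.Rep,
      (∀ q r : X (nk k), |dist (f q) (f r) - dist q r| ≤ ε k) ∧
      ∀ y : p.Rep, ∃ a : X (nk k), dist y (f a) ≤ ε k := by
    intro k
    have h1 : GromovHausdorff.ghDist (X (nk k)) p.Rep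
        < dist (u (nk k)) p + 1 / (k + 1) := by
      rw [hd k]
      have : (0 : ℝ) < 1 / ((k : ℝ) + 1) := by positivity
      linarith
    obtain ⟨f, h2, h3⟩ := exists_approx_map_of_ghDist_lt _ _ h1
    exact ⟨f, h2, h3⟩
  choose f hf1 hf2 using hf
  refine ⟨ε, f, ?_, hεpos, fun k => ⟨hf1 k, hf2 k⟩⟩
  -- `ε → 0`
  have hdist0 : Tendsto (fun k => dist (u (nk k)) p) atTop (nhds 0) :=
    (tendsto_iff_dist_tendsto_zero).1 hconv
  have h1k : Tendsto (fun k : ℕ => 1 / ((k : ℝ) + 1)) atTop (nhds 0) :=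
    tendsto_one_div_add_atTop_nhds_zero_nat
  have := (hdist0.add h1k).const_mul 2
  simpa [hε, one_div] using this
end

section
/- If groups Γ₁ and Γ₂ are uniformly measured equivalent (UME) and Γ₂ and Γ₃ are uniformly measured equivalent, then Γ₁ and Γ₃ are uniformly measured equivalent, in the following abstract setting: given measured couplings (X, μ) for (Γ₁,Γ₂) and (Y, ν) for (Γ₂,Γ₃) with the uniformity (bounded covering) condition, the space (X × Y)/Γ₂ with the induced measure is a measured coupling of Γ₁ and Γ₃ satisfying the uniformity condition. -/
open MeasureTheory

/-- Two countable groups are uniformly measured equivalent (UME) if they admit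
commuting, measure-preserving, free actions on a measure space with
finite-measure Borel fundamental domains, such that each translate of one
fundamental domain is covered by finitely many translates of the other. -/
def IsUME (G H : Type) [Group G] [Group H] : Prop :=
  ∃ (Z : Type) (_ : MeasurableSpace Z) (μ : Measure Z)
    (a : G → Z → Z) (b : H → Z → Z),
    (∀ g, Measurable (a g)) ∧ (∀ h, Measurable (b h)) ∧
    (∀ g g' z, a (g * g') z = a g (a g' z)) ∧ (∀ z, a 1 z = z) ∧
    (∀ h h' z, b (h * h') z = b h (b h' z)) ∧ (∀ z, b 1 z = z) ∧
    (∀ g h z, a g (b h z) = b h (a g z)) ∧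
    (∀ (g : G) (A : Set Z), MeasurableSet A → μ (a g ⁻¹' A) = μ A) ∧
    (∀ (h : H) (A : Set Z), MeasurableSet A → μ (b h ⁻¹' A) = μ A) ∧
    (∀ g : G, g ≠ 1 → ∀ z, a g z ≠ z) ∧ (∀ h : H, h ≠ 1 → ∀ z, b h z ≠ z) ∧
    ∃ ZG ZH : Set Z, MeasurableSet ZG ∧ MeasurableSet ZH ∧
      μ ZG < ⊤ ∧ μ ZH < ⊤ ∧
      (∀ z : Z, ∃! g : G, a g z ∈ ZG) ∧ (∀ z : Z, ∃! h : H, b h z ∈ ZH) ∧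
      (∀ g : G, ∃ F : Finset H, a g '' ZG ⊆ ⋃ h ∈ F, b h '' ZH) ∧
      (∀ h : H, ∃ F : Finset G, b h '' ZH ⊆ ⋃ g ∈ F, a g '' ZG)

/-- Uniform measured equivalence is transitive: composing a UME coupling of
`Γ₁, Γ₂` with one of `Γ₂, Γ₃` (via `(X × Y)/Γ₂`) yields a UME coupling of
`Γ₁, Γ₃`. -/
theorem isUME_trans (Γ₁ Γ₂ Γ₃ : Type) [Group Γ₁] [Group Γ₂] [Group Γ₃]
    [Countable Γ₁] [Countable Γ₂] [Countable Γ₃]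
    (h12 : IsUME Γ₁ Γ₂) (h23 : IsUME Γ₂ Γ₃) : IsUME Γ₁ Γ₃ := by
  classical
  obtain ⟨X, mX, μ, a, b, ma, mb, lawa, onea, lawb, oneb, comm1, pra, prb, fra, frb,
    X₁, X₂, mX₁, mX₂, fX₁, fX₂, exa, exb, uni12, uni21⟩ := h12
  obtain ⟨Y, mY, ν, c, d, mc, md, lawc, onec, lawd, oned, comm2, prc, prd, frc, frd,
    Y₂, Y₃, mY₂, mY₃, fY₂, fY₃, exc, exd, uni23, uni32⟩ := h23
  letI := mX
  letI := mY
  -- basic inverse facts for the actions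
  have ainv1 : ∀ (g : Γ₁) x, a g⁻¹ (a g x) = x := fun g x => by
    rw [← lawa, inv_mul_cancel, onea]
  have ainv2 : ∀ (g : Γ₁) x, a g (a g⁻¹ x) = x := fun g x => by
    rw [← lawa, mul_inv_cancel, onea]
  have binv1 : ∀ (h : Γ₂) x, b h⁻¹ (b h x) = x := fun h x => by
    rw [← lawb, inv_mul_cancel, oneb]
  have cinv1 : ∀ (h : Γ₂) y, c h⁻¹ (c h y) = y := fun h y => by
    rw [← lawc, inv_mul_cancel, onec]
  have dinv1 : ∀ (t : Γ₃) y, d t⁻¹ (d t y) = y := fun t y => by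
    rw [← lawd, inv_mul_cancel, oned]
  have dinv2 : ∀ (t : Γ₃) y, d t (d t⁻¹ y) = y := fun t y => by
    rw [← lawd, mul_inv_cancel, oned]
  -- measure preserving packages
  have mpa : ∀ g, MeasurePreserving (a g) μ μ := fun g =>
    ⟨ma g, Measure.ext fun s hs => by rw [Measure.map_apply (ma g) hs, pra g s hs]⟩
  have mpb : ∀ h, MeasurePreserving (b h) μ μ := fun h =>
    ⟨mb h, Measure.ext fun s hs => by rw [Measure.map_apply (mb h) hs, prb h s hs]⟩
  have mpc : ∀ h, MeasurePreserving (c h) ν ν := fun h =>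
    ⟨mc h, Measure.ext fun s hs => by rw [Measure.map_apply (mc h) hs, prc h s hs]⟩
  have mpd : ∀ t, MeasurePreserving (d t) ν ν := fun t =>
    ⟨md t, Measure.ext fun s hs => by rw [Measure.map_apply (md t) hs, prd t s hs]⟩
  -- sigma-finiteness
  haveI sfμ : SigmaFinite μ := by
    refine Measure.sigmaFinite_of_countable
      (Set.countable_range fun g : Γ₁ => a g ⁻¹' X₁) ?_ ?_
    · rintro s ⟨g, rfl⟩; rw [pra g X₁ mX₁]; exact fX₁
    · refine Set.eq_univ_of_forall fun x => ?_
      obtain ⟨g, hg, -⟩ := exa x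
      exact ⟨a g ⁻¹' X₁, ⟨g, rfl⟩, hg⟩
  haveI sfν : SigmaFinite ν := by
    refine Measure.sigmaFinite_of_countable
      (Set.countable_range fun h : Γ₂ => c h ⁻¹' Y₂) ?_ ?_
    · rintro s ⟨h, rfl⟩; rw [prc h Y₂ mY₂]; exact fY₂
    · refine Set.eq_univ_of_forall fun y => ?_
      obtain ⟨h, hh, -⟩ := exc y
      exact ⟨c h ⁻¹' Y₂, ⟨h, rfl⟩, hh⟩
  -- the normalizing elements
  choose τ hτ hτu using exb
  choose σS hσ hσu using exc
  have tau_b : ∀ (h : Γ₂) x, τ (b h x) = τ x * h⁻¹ := fun h x =>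
    (hτu (b h x) (τ x * h⁻¹) (by show b (τ x * h⁻¹) (b h x) ∈ X₂; rw [← lawb, inv_mul_cancel_right]; exact hτ x)).symm
  have sig_c : ∀ (h : Γ₂) y, σS (c h y) = σS y * h⁻¹ := fun h y =>
    (hσu (c h y) (σS y * h⁻¹) (by show c (σS y * h⁻¹) (c h y) ∈ Y₂; rw [← lawc, inv_mul_cancel_right]; exact hσ y)).symm
  have sig_mem : ∀ {y}, y ∈ Y₂ → σS y = 1 := fun {y} hy =>
    (hσu y 1 (by show c (1:Γ₂) y ∈ Y₂; rw [onec]; exact hy)).symm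
  have sig_fiber : ∀ (h : Γ₂) y, σS y = h ↔ c h y ∈ Y₂ := by
    intro h y
    constructor
    · rintro rfl; exact hσ y
    · intro hy; exact (hσu y h hy).symm
  -- the composed coupling data
  set U : Set (X × Y) := Set.univ ×ˢ Y₂ with hU
  have mU : MeasurableSet U := MeasurableSet.univ.prod mY₂
  set η : Measure (X × Y) := (μ.prod ν).restrict U with hη
  set act1 : Γ₁ → X × Y → X × Y := fun g p => (a g p.1, p.2) with hact1
  set kk : Γ₃ → Y → Γ₂ := fun t y => σS (d t y) * (σS y)⁻¹ with hkk
  set act3 : Γ₃ → X × Y → X × Y :=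
    fun t p => (b (kk t p.2) p.1, c (kk t p.2) (d t p.2)) with hact3
  set D₁ : Set (X × Y) := {p | b (σS p.2) p.1 ∈ X₁} with hD₁
  set D₃ : Set (X × Y) := {p | c (τ p.1) p.2 ∈ Y₃} with hD₃
  -- key identities for kk and the Γ₃-action
  have kk_spec : ∀ t y, σS (d t y) = kk t y * σS y := by
    intro t y; rw [hkk]; simp only [inv_mul_cancel_right]
  have kk_one : ∀ y, kk 1 y = 1 := by
    intro y; rw [hkk]; simp only [oned, mul_inv_cancel]
  have act3_one : ∀ p : X × Y, act3 1 p = p := by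
    intro p; rw [hact3]; simp only [kk_one, oneb, oned, onec]
  have kk_comp : ∀ t t' y, kk t (c (kk t' y) (d t' y)) * kk t' y = kk (t * t') y := by
    intro t t' y
    have h1 : d t (c (kk t' y) (d t' y)) = c (kk t' y) (d (t * t') y) := by
      rw [← comm2, lawd]
    simp only [hkk] at h1 ⊢
    simp only [h1, sig_c]
    group
  have act3_mul : ∀ t t' (p : X × Y), act3 (t * t') p = act3 t (act3 t' p) := by
    intro t t' p
    have h1 : d t (c (kk t' p.2) (d t' p.2)) = c (kk t' p.2) (d (t * t') p.2) := by
      rw [← comm2, lawd]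
    rw [hact3]
    simp only [h1, ← lawb, ← lawc, kk_comp]
  have act3_inv1 : ∀ t (p : X × Y), act3 t⁻¹ (act3 t p) = p := fun t p => by
    rw [← act3_mul, inv_mul_cancel, act3_one]
  have act3_inv2 : ∀ t (p : X × Y), act3 t (act3 t⁻¹ p) = p := fun t p => by
    rw [← act3_mul, mul_inv_cancel, act3_one]
  have act1_inv1 : ∀ (g : Γ₁) (p : X × Y), act1 g⁻¹ (act1 g p) = p := fun g p => by
    rw [hact1]; simp only [ainv1]
  have act1_inv2 : ∀ (g : Γ₁) (p : X × Y), act1 g (act1 g⁻¹ p) = p := fun g p => by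
    rw [hact1]; simp only [ainv2]
  -- image characterizations
  have img1 : ∀ (g : Γ₁) (S : Set (X × Y)), act1 g '' S = act1 g⁻¹ ⁻¹' S := by
    intro g S
    ext p
    simp only [Set.mem_preimage]
    constructor
    · rintro ⟨q, hq, rfl⟩
      rw [act1_inv1]; exact hq
    · intro hp
      exact ⟨act1 g⁻¹ p, hp, act1_inv2 g p⟩
  have img3 : ∀ (t : Γ₃) (S : Set (X × Y)), act3 t '' S = act3 t⁻¹ ⁻¹' S := by
    intro t S
    ext p
    simp only [Set.mem_preimage]
    constructor
    · rintro ⟨q, hq, rfl⟩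
      rw [act3_inv1]; exact hq
    · intro hp
      exact ⟨act3 t⁻¹ p, hp, act3_inv2 t p⟩
  have mem_img1 : ∀ (g : Γ₁) (p : X × Y),
      p ∈ act1 g '' D₁ ↔ b (σS p.2) p.1 ∈ a g '' X₁ := by
    intro g p
    rw [img1]
    simp only [hact1, hD₁, Set.mem_preimage, Set.mem_setOf_eq]
    constructor
    · intro hp
      exact ⟨a g⁻¹ (b (σS p.2) p.1), by rw [comm1]; exact hp, ainv2 g _⟩
    · rintro ⟨x₀, hx₀, hax⟩
      have he : b (σS p.2) (a g⁻¹ p.1) = x₀ := by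
        rw [← comm1, ← hax, ainv1]
      rw [he]; exact hx₀
  have mem_img3 : ∀ (t : Γ₃) (p : X × Y),
      p ∈ act3 t '' D₃ ↔ d t⁻¹ (c (τ p.1) p.2) ∈ Y₃ := by
    intro t p
    rw [img3]
    simp only [hact3, hD₃, Set.mem_preimage, Set.mem_setOf_eq]
    rw [tau_b, ← lawc, inv_mul_cancel_right, comm2]
  -- measurability of the actions
  have meas_act1 : ∀ g, Measurable (act1 g) := by
    intro g
    rw [hact1]
    exact ((ma g).comp measurable_fst).prodMk measurable_snd
  have meas_sig_fiber : ∀ h : Γ₂, MeasurableSet {y | σS y = h} := by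
    intro h
    have he : {y | σS y = h} = c h ⁻¹' Y₂ := by
      ext y; exact sig_fiber h y
    rw [he]; exact (mc h) mY₂
  have meas_kk_fiber : ∀ (t : Γ₃) (h : Γ₂), MeasurableSet {y | kk t y = h} := by
    intro t h
    have he : {y | kk t y = h} =
        ⋃ s : Γ₂, ({y | σS y = s} ∩ (fun y => d t y) ⁻¹' {y | σS y = h * s}) := by
      ext y
      simp only [Set.mem_setOf_eq, Set.mem_iUnion, Set.mem_inter_iff, Set.mem_preimage]
      constructor
      · intro he
        refine ⟨σS y, rfl, ?_⟩
        rw [kk_spec, he]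
      · rintro ⟨s, hs1, hs2⟩
        rw [hkk]
        simp only [hs1, hs2, mul_inv_cancel_right]
    rw [he]
    exact MeasurableSet.iUnion fun s =>
      (meas_sig_fiber s).inter ((md t) (meas_sig_fiber (h * s)))
  have meas_act3 : ∀ t, Measurable (act3 t) := by
    intro t
    refine fun s hs => ?_
    have he : act3 t ⁻¹' s = ⋃ h : Γ₂,
        ((Set.univ ×ˢ {y | kk t y = h}) ∩
          (fun p : X × Y => (b h p.1, c h (d t p.2))) ⁻¹' s) := by
      ext p
      simp only [Set.mem_preimage, Set.mem_iUnion, Set.mem_inter_iff, Set.mem_prod,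
        Set.mem_univ, true_and, Set.mem_setOf_eq]
      have hrep : ∀ h : Γ₂, kk t p.2 = h → act3 t p = (b h p.1, c h (d t p.2)) := by
        rintro h rfl; rw [hact3]
      constructor
      · intro hp
        exact ⟨kk t p.2, rfl, by rw [← hrep _ rfl]; exact hp⟩
      · rintro ⟨h, hh, hmem⟩
        rw [hrep h hh]; exact hmem
    rw [he]
    exact MeasurableSet.iUnion fun h =>
      (MeasurableSet.univ.prod (meas_kk_fiber t h)).inter
        ((((mb h).comp measurable_fst).prodMk
          ((mc h).comp ((md t).comp measurable_snd))) hs)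
  -- measure preservation of the Γ₁-action
  have pr_act1 : ∀ (g : Γ₁) (A : Set (X × Y)), MeasurableSet A →
      η (act1 g ⁻¹' A) = η A := by
    intro g A hA
    have mp : MeasurePreserving (act1 g) (μ.prod ν) (μ.prod ν) := by
      rw [hact1]
      exact (mpa g).prod (MeasurePreserving.id ν)
    have hpreU : act1 g ⁻¹' U = U := by
      ext p
      rw [hU]
      simp only [hact1, Set.mem_preimage, Set.mem_prod, Set.mem_univ, true_and]
    have hpre : act1 g ⁻¹' A ∩ U = act1 g ⁻¹' (A ∩ U) := by
      rw [Set.preimage_inter, hpreU]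
    rw [hη, Measure.restrict_apply (meas_act1 g hA), hpre,
      mp.measure_preimage (hA.inter mU).nullMeasurableSet,
      Measure.restrict_apply hA]
  -- measure preservation of the Γ₃-action
  have pr_act3 : ∀ (t : Γ₃) (A : Set (X × Y)), MeasurableSet A →
      η (act3 t ⁻¹' A) = η A := by
    intro t A hA
    set Q : Γ₂ → Set (X × Y) :=
      fun h => Set.univ ×ˢ (Y₂ ∩ (fun y => d t y) ⁻¹' (c h ⁻¹' Y₂)) with hQ
    set R : Γ₂ → Set (X × Y) :=
      fun h => Set.univ ×ˢ (Y₂ ∩ (fun y => d t⁻¹ y) ⁻¹' (c h⁻¹ ⁻¹' Y₂)) with hR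
    set F : Γ₂ → X × Y → X × Y := fun h p => (b h p.1, c h (d t p.2)) with hF
    have mQ : ∀ h, MeasurableSet (Q h) := fun h =>
      MeasurableSet.univ.prod (mY₂.inter ((md t) ((mc h) mY₂)))
    have mR : ∀ h, MeasurableSet (R h) := fun h =>
      MeasurableSet.univ.prod (mY₂.inter ((md t⁻¹) ((mc h⁻¹) mY₂)))
    have mpF : ∀ h, MeasurePreserving (F h) (μ.prod ν) (μ.prod ν) := by
      intro h
      rw [hF]
      exact (mpb h).prod ((mpc h).comp (mpd t))
    have q_union : ⋃ h, Q h = U := by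
      ext p
      rw [hU]
      simp only [hQ, Set.mem_iUnion, Set.mem_prod, Set.mem_univ, true_and,
        Set.mem_inter_iff, Set.mem_preimage]
      constructor
      · rintro ⟨h, hy, -⟩; exact hy
      · intro hy; exact ⟨σS (d t p.2), hy, hσ _⟩
    have r_union : ⋃ h, R h = U := by
      ext p
      rw [hU]
      simp only [hR, Set.mem_iUnion, Set.mem_prod, Set.mem_univ, true_and,
        Set.mem_inter_iff, Set.mem_preimage]
      constructor
      · rintro ⟨h, hy, -⟩; exact hy
      · intro hy
        exact ⟨(σS (d t⁻¹ p.2))⁻¹, hy, by rw [inv_inv]; exact hσ _⟩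
    have q_disj : Pairwise (Function.onFun Disjoint fun h => act3 t ⁻¹' A ∩ Q h) := by
      intro h h' hne
      simp only [Function.onFun]
      rw [Set.disjoint_left]
      rintro p ⟨-, hp⟩ ⟨-, hp'⟩
      rw [hQ] at hp hp'
      simp only [Set.mem_prod, Set.mem_univ, true_and, Set.mem_inter_iff,
        Set.mem_preimage] at hp hp'
      exact hne ((hσu _ _ hp.2).trans (hσu _ _ hp'.2).symm)
    have r_disj : Pairwise (Function.onFun Disjoint fun h => A ∩ R h) := by
      intro h h' hne
      simp only [Function.onFun]
      rw [Set.disjoint_left]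
      rintro p ⟨-, hp⟩ ⟨-, hp'⟩
      rw [hR] at hp hp'
      simp only [Set.mem_prod, Set.mem_univ, true_and, Set.mem_inter_iff,
        Set.mem_preimage] at hp hp'
      exact hne (inv_injective ((hσu _ _ hp.2).trans (hσu _ _ hp'.2).symm))
    have on_q : ∀ (h : Γ₂) (p : X × Y), p ∈ Q h → act3 t p = F h p := by
      intro h p hp
      rw [hQ] at hp
      simp only [Set.mem_prod, Set.mem_univ, true_and, Set.mem_inter_iff,
        Set.mem_preimage] at hp
      have h1 : σS p.2 = 1 := sig_mem hp.1
      have h2 : σS (d t p.2) = h := (hσu _ _ hp.2).symm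
      rw [hact3, hF]
      simp only [hkk, h1, h2, inv_one, mul_one]
    have F_pre_R : ∀ h, F h ⁻¹' (R h) = Q h := by
      intro h
      ext p
      simp only [hF, hR, hQ, Set.mem_preimage, Set.mem_prod, Set.mem_univ, true_and,
        Set.mem_inter_iff]
      have key : c h⁻¹ (d t⁻¹ (c h (d t p.2))) = p.2 := by
        rw [← comm2, dinv1, cinv1]
      rw [key]
      exact and_comm
    calc η (act3 t ⁻¹' A) = (μ.prod ν) (act3 t ⁻¹' A ∩ U) := by
          rw [hη, Measure.restrict_apply (meas_act3 t hA)]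
      _ = (μ.prod ν) (⋃ h, act3 t ⁻¹' A ∩ Q h) := by rw [← Set.inter_iUnion, q_union]
      _ = ∑' h, (μ.prod ν) (act3 t ⁻¹' A ∩ Q h) :=
          measure_iUnion q_disj fun h => (meas_act3 t hA).inter (mQ h)
      _ = ∑' h, (μ.prod ν) (A ∩ R h) := by
          refine tsum_congr fun h => ?_
          have e1 : act3 t ⁻¹' A ∩ Q h = F h ⁻¹' (A ∩ R h) := by
            rw [Set.preimage_inter, F_pre_R]
            ext p
            simp only [Set.mem_inter_iff, Set.mem_preimage]
            constructor
            · rintro ⟨h1, h2⟩; exact ⟨by rw [← on_q h p h2]; exact h1, h2⟩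
            · rintro ⟨h1, h2⟩; exact ⟨by rw [on_q h p h2]; exact h1, h2⟩
          rw [e1, (mpF h).measure_preimage (hA.inter (mR h)).nullMeasurableSet]
      _ = (μ.prod ν) (⋃ h, A ∩ R h) :=
          (measure_iUnion r_disj fun h => hA.inter (mR h)).symm
      _ = (μ.prod ν) (A ∩ U) := by rw [← Set.inter_iUnion, r_union]
      _ = η A := by rw [hη, Measure.restrict_apply hA]
  -- freeness
  have free1 : ∀ g : Γ₁, g ≠ 1 → ∀ p : X × Y, act1 g p ≠ p := by
    intro g hg p heq
    rw [hact1] at heq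
    exact fra g hg p.1 (congrArg Prod.fst heq)
  have free3 : ∀ t : Γ₃, t ≠ 1 → ∀ p : X × Y, act3 t p ≠ p := by
    intro t ht p heq
    rw [hact3] at heq
    have h1 : b (kk t p.2) p.1 = p.1 := congrArg Prod.fst heq
    have h2 : c (kk t p.2) (d t p.2) = p.2 := congrArg Prod.snd heq
    by_cases hk : kk t p.2 = 1
    · rw [hk, onec] at h2
      exact frd t ht p.2 h2
    · exact frb _ hk p.1 h1
  -- measurability of the fundamental domains
  have mD₁ : MeasurableSet D₁ := by
    have he : D₁ = ⋃ h : Γ₂, (b h ⁻¹' X₁) ×ˢ (c h ⁻¹' Y₂) := by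
      ext p
      rw [hD₁]
      simp only [Set.mem_setOf_eq, Set.mem_iUnion, Set.mem_prod, Set.mem_preimage]
      constructor
      · intro hp; exact ⟨σS p.2, hp, hσ p.2⟩
      · rintro ⟨h, hbx, hcy⟩
        rw [← hσu p.2 h hcy]
        exact hbx
    rw [he]
    exact MeasurableSet.iUnion fun h => ((mb h) mX₁).prod ((mc h) mY₂)
  have mD₃ : MeasurableSet D₃ := by
    have he : D₃ = ⋃ h : Γ₂, (b h ⁻¹' X₂) ×ˢ (c h ⁻¹' Y₃) := by
      ext p
      rw [hD₃]
      simp only [Set.mem_setOf_eq, Set.mem_iUnion, Set.mem_prod, Set.mem_preimage]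
      constructor
      · intro hp; exact ⟨τ p.1, hτ p.1, hp⟩
      · rintro ⟨h, hbx, hcy⟩
        rw [← hτu p.1 h hbx]
        exact hcy
    rw [he]
    exact MeasurableSet.iUnion fun h => ((mb h) mX₂).prod ((mc h) mY₃)
  -- finite measures of the fundamental domains
  have ηD₁ : η D₁ < ⊤ := by
    have e : D₁ ∩ U = X₁ ×ˢ Y₂ := by
      ext p
      rw [hD₁, hU]
      simp only [Set.mem_inter_iff, Set.mem_setOf_eq, Set.mem_prod, Set.mem_univ, true_and]
      constructor
      · rintro ⟨h1, h2⟩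
        rw [sig_mem h2, oneb] at h1
        exact ⟨h1, h2⟩
      · rintro ⟨h1, h2⟩
        rw [sig_mem h2, oneb]
        exact ⟨h1, h2⟩
    rw [hη, Measure.restrict_apply mD₁, e, Measure.prod_prod]
    exact ENNReal.mul_lt_top fX₁ fY₂
  have ηD₃ : η D₃ < ⊤ := by
    have hsub : D₃ ∩ U ⊆ ⋃ h : Γ₂, (b h ⁻¹' X₂) ×ˢ (c h ⁻¹' Y₃ ∩ Y₂) := by
      rintro p ⟨hp, hpu⟩
      rw [hD₃] at hp
      rw [hU] at hpu
      refine Set.mem_iUnion.mpr ⟨τ p.1, ?_⟩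
      simp only [Set.mem_prod, Set.mem_preimage, Set.mem_inter_iff]
      exact ⟨hτ p.1, hp, hpu.2⟩
    have key : ∀ h : Γ₂, ν (c h ⁻¹' Y₃ ∩ Y₂) = ν (Y₃ ∩ c h⁻¹ ⁻¹' Y₂) := by
      intro h
      have e : c h ⁻¹' Y₃ ∩ Y₂ = c h ⁻¹' (Y₃ ∩ c h⁻¹ ⁻¹' Y₂) := by
        ext y
        simp only [Set.mem_inter_iff, Set.mem_preimage, cinv1]
      rw [e, prc h _ (mY₃.inter ((mc h⁻¹) mY₂))]
    have disj : Pairwise (Function.onFun Disjoint fun h : Γ₂ => Y₃ ∩ c h⁻¹ ⁻¹' Y₂) := by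
      intro h h' hne
      simp only [Function.onFun]
      rw [Set.disjoint_left]
      rintro y ⟨-, hy⟩ ⟨-, hy'⟩
      exact hne (inv_injective ((hσu y h⁻¹ hy).trans (hσu y h'⁻¹ hy').symm))
    calc η D₃ = (μ.prod ν) (D₃ ∩ U) := by rw [hη, Measure.restrict_apply mD₃]
      _ ≤ (μ.prod ν) (⋃ h : Γ₂, (b h ⁻¹' X₂) ×ˢ (c h ⁻¹' Y₃ ∩ Y₂)) := measure_mono hsub
      _ ≤ ∑' h : Γ₂, (μ.prod ν) ((b h ⁻¹' X₂) ×ˢ (c h ⁻¹' Y₃ ∩ Y₂)) := measure_iUnion_le _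
      _ = ∑' h : Γ₂, μ X₂ * ν (Y₃ ∩ c h⁻¹ ⁻¹' Y₂) := by
          refine tsum_congr fun h => ?_
          rw [Measure.prod_prod, prb h X₂ mX₂, key h]
      _ = μ X₂ * ∑' h : Γ₂, ν (Y₃ ∩ c h⁻¹ ⁻¹' Y₂) := ENNReal.tsum_mul_left
      _ = μ X₂ * ν (⋃ h : Γ₂, Y₃ ∩ c h⁻¹ ⁻¹' Y₂) := by
          rw [measure_iUnion disj fun h => mY₃.inter ((mc h⁻¹) mY₂)]
      _ ≤ μ X₂ * ν Y₃ := by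
          gcongr
          exact Set.iUnion_subset fun h => Set.inter_subset_left
      _ < ⊤ := ENNReal.mul_lt_top fX₂ fY₃
  -- fundamental domain property
  have exu1 : ∀ p : X × Y, ∃! g : Γ₁, act1 g p ∈ D₁ := by
    intro p
    have e : ∀ g : Γ₁, act1 g p ∈ D₁ ↔ a g (b (σS p.2) p.1) ∈ X₁ := by
      intro g
      simp only [hact1, hD₁, Set.mem_setOf_eq]
      rw [comm1]
    exact (existsUnique_congr e).mpr (exa (b (σS p.2) p.1))
  have exu3 : ∀ p : X × Y, ∃! t : Γ₃, act3 t p ∈ D₃ := by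
    intro p
    have e : ∀ t : Γ₃, act3 t p ∈ D₃ ↔ d t (c (τ p.1) p.2) ∈ Y₃ := by
      intro t
      simp only [hact3, hD₃, Set.mem_setOf_eq]
      rw [tau_b, ← lawc, inv_mul_cancel_right, comm2]
    exact (existsUnique_congr e).mpr (exd (c (τ p.1) p.2))
  -- uniformity
  have uniA : ∀ g : Γ₁, ∃ F : Finset Γ₃, act1 g '' D₁ ⊆ ⋃ t ∈ F, act3 t '' D₃ := by
    intro g
    obtain ⟨F₁, hF₁⟩ := uni12 g
    choose F₂ hF₂ using uni23
    refine ⟨F₁.biUnion fun h => F₂ h⁻¹, ?_⟩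
    intro p hp
    rw [mem_img1] at hp
    obtain ⟨h, hhF₁, hmem⟩ := Set.mem_iUnion₂.mp (hF₁ hp)
    obtain ⟨x'', hx'', hbx⟩ := hmem
    have hτx : τ p.1 = h⁻¹ * σS p.2 := by
      refine (hτu p.1 _ ?_).symm
      show b (h⁻¹ * σS p.2) p.1 ∈ X₂
      rw [lawb, ← hbx, binv1]
      exact hx''
    have h2 : c (τ p.1) p.2 ∈ c h⁻¹ '' Y₂ := by
      refine ⟨c (σS p.2) p.2, hσ p.2, ?_⟩
      rw [← lawc, ← hτx]
    obtain ⟨t, htF, hmem3⟩ := Set.mem_iUnion₂.mp (hF₂ h⁻¹ h2)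
    obtain ⟨y₃, hy₃, hdt⟩ := hmem3
    refine Set.mem_iUnion₂.mpr ⟨t, Finset.mem_biUnion.mpr ⟨h, hhF₁, htF⟩, ?_⟩
    rw [mem_img3, ← hdt, dinv1]
    exact hy₃
  have uniB : ∀ t : Γ₃, ∃ F : Finset Γ₁, act3 t '' D₃ ⊆ ⋃ g ∈ F, act1 g '' D₁ := by
    intro t
    obtain ⟨F₃, hF₃⟩ := uni32 t
    choose F₄ hF₄ using uni21
    refine ⟨F₃.biUnion fun h => F₄ h⁻¹, ?_⟩
    intro p hp
    rw [mem_img3] at hp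
    have h1 : c (τ p.1) p.2 ∈ d t '' Y₃ := ⟨d t⁻¹ (c (τ p.1) p.2), hp, dinv2 t _⟩
    obtain ⟨h, hhF₃, hmem⟩ := Set.mem_iUnion₂.mp (hF₃ h1)
    obtain ⟨y₀, hy₀, hcy⟩ := hmem
    have hσy : σS p.2 = h⁻¹ * τ p.1 := by
      refine (hσu p.2 _ ?_).symm
      show c (h⁻¹ * τ p.1) p.2 ∈ Y₂
      rw [lawc, ← hcy, cinv1]
      exact hy₀
    have h2 : b (σS p.2) p.1 ∈ b h⁻¹ '' X₂ := by
      refine ⟨b (τ p.1) p.1, hτ p.1, ?_⟩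
      rw [← lawb, ← hσy]
    obtain ⟨g, hgF, hg⟩ := Set.mem_iUnion₂.mp (hF₄ h⁻¹ h2)
    exact Set.mem_iUnion₂.mpr
      ⟨g, Finset.mem_biUnion.mpr ⟨h, hhF₃, hgF⟩, (mem_img1 g p).mpr hg⟩
  -- assemble
  refine ⟨X × Y, inferInstance, η, act1, act3, meas_act1, meas_act3, ?_, ?_,
    act3_mul, act3_one, ?_, pr_act1, pr_act3, free1, free3,
    D₁, D₃, mD₁, mD₃, ηD₁, ηD₃, exu1, exu3, uniA, uniB⟩
  · intro g g' p
    rw [hact1]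
    simp only [lawa]
  · intro p
    rw [hact1]
    simp only [onea]
  · intro g t p
    simp only [hact1, hact3]
    rw [comm1]
end
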